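/- (Huber; Lemma 1(ii)) For every ε ∈ (0,1) and every measurable set A ⊆ Ψ, the lower posterior probability over all ε-contaminations of the marginal prior satisfies Π^{lower}(A|x) = Π(A|x) / (1 + ε* r(A^c)). -/

import Mathlib

open MeasureTheory Set

variable {Ω : Type*} [MeasurableSpace Ω]

/-- The posterior probability of a set `A` when the prior is `μ` and the likelihood
(conditional prior predictive density `ψ ↦ m(x|ψ)`) is `f`. -/
noncomputable def postProb (f : Ω → ℝ) (μ : Measure Ω) (A : Set Ω) : ℝ :=
  (∫ ψ in A, f ψ ∂μ) / (∫ ψ, f ψ ∂μ)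

/-- The ε-contaminated prior `(1−ε)P + εQ`. -/
noncomputable def contam (P Q : Measure Ω) (ε : ℝ) : Measure Ω :=
  ENNReal.ofReal (1 - ε) • P + ENNReal.ofReal ε • Q

/-- `r(A) = sup_{ψ ∈ A} f(ψ) / m` (equal to `0` when `A = ∅` since `Real.sSup ∅ = 0`). -/
noncomputable def rSup (f : Ω → ℝ) (P : Measure Ω) (A : Set Ω) : ℝ :=
  sSup (f '' A) / ∫ ψ, f ψ ∂P

/-- The upper posterior probability over all ε-contaminations. -/
noncomputable def upperPost (f : Ω → ℝ) (P : Measure Ω) (ε : ℝ) (A : Set Ω) : ℝ :=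
  ⨆ Q : ProbabilityMeasure Ω, postProb f (contam P (Q : Measure Ω) ε) A


/-- The lower posterior probability over all ε-contaminations. -/
noncomputable def lowerPost (f : Ω → ℝ) (P : Measure Ω) (ε : ℝ) (A : Set Ω) : ℝ :=
  ⨅ Q : ProbabilityMeasure Ω, postProb f (contam P (Q : Measure Ω) ε) A

lemma integral_contam (f : Ω → ℝ) {P Q : Measure Ω} (hP : Integrable f P) (hQ : Integrable f Q)
    {ε : ℝ} (hε0 : 0 ≤ ε) (hε1 : ε ≤ 1) :
    ∫ ψ, f ψ ∂(contam P Q ε) = (1 - ε) * ∫ ψ, f ψ ∂P + ε * ∫ ψ, f ψ ∂Q := by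
  rw [contam, integral_add_measure (hP.smul_measure ENNReal.ofReal_ne_top)
      (hQ.smul_measure ENNReal.ofReal_ne_top),
    integral_smul_measure, integral_smul_measure,
    ENNReal.toReal_ofReal (by linarith), ENNReal.toReal_ofReal hε0]
  simp [smul_eq_mul]

lemma setIntegral_contam (f : Ω → ℝ) {P Q : Measure Ω} (hP : Integrable f P)
    (hQ : Integrable f Q) {ε : ℝ} (hε0 : 0 ≤ ε) (hε1 : ε ≤ 1) (A : Set Ω) :
    ∫ ψ in A, f ψ ∂(contam P Q ε)
      = (1 - ε) * ∫ ψ in A, f ψ ∂P + ε * ∫ ψ in A, f ψ ∂Q := by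
  have h : (contam P Q ε).restrict A = contam (P.restrict A) (Q.restrict A) ε := by
    simp [contam, Measure.restrict_add, Measure.restrict_smul]
  rw [show (∫ ψ in A, f ψ ∂(contam P Q ε)) = ∫ ψ, f ψ ∂((contam P Q ε).restrict A) from rfl, h,
    integral_contam f hP.restrict hQ.restrict hε0 hε1]


set_option maxHeartbeats 1000000 in
/-- Huber's Lemma 1 (ii): Π^{lower}(A|x) = Π(A|x) / (1 + ε* r(A^c)). -/
theorem lowerPost_eq
    (f : Ω → ℝ) (hf : Measurable f) (hf0 : ∀ ψ, 0 ≤ f ψ)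
    (C : ℝ) (hfC : ∀ ψ, f ψ ≤ C)
    (P : Measure Ω) [IsProbabilityMeasure P]
    (hm : 0 < ∫ ψ, f ψ ∂P)
    (ε : ℝ) (hε : ε ∈ Set.Ioo (0 : ℝ) 1)
    (A : Set Ω) (hA : MeasurableSet A) :
    lowerPost f P ε A =
      postProb f P A / (1 + (ε / (1 - ε)) * rSup f P Aᶜ) := by
  classical
  haveI : Nonempty (ProbabilityMeasure Ω) := ⟨⟨P, inferInstance⟩⟩
  obtain ⟨hε0, hε1⟩ := hε
  have hε1' : 0 < 1 - ε := by linarith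
  have hint : ∀ (μ : Measure Ω) [IsFiniteMeasure μ], Integrable f μ := by
    intro μ _
    exact ⟨hf.aestronglyMeasurable, HasFiniteIntegral.of_bounded
      (C := C) (ae_of_all _ fun ψ => by
        rw [Real.norm_eq_abs, abs_of_nonneg (hf0 ψ)]; exact hfC ψ)⟩
  set m := ∫ ψ, f ψ ∂P with hm_def
  set IA := ∫ ψ in A, f ψ ∂P with hIA_def
  set S := sSup (f '' Aᶜ) with hS_def
  have hS0 : 0 ≤ S := Real.sSup_nonneg fun x hx => by
    obtain ⟨ψ, _, rfl⟩ := hx; exact hf0 ψ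
  have hbdd : BddAbove (f '' Aᶜ) := ⟨C, fun y hy => by obtain ⟨ψ, _, rfl⟩ := hy; exact hfC ψ⟩
  have hIA0 : 0 ≤ IA := setIntegral_nonneg hA fun ψ _ => hf0 ψ
  have hIAm : IA ≤ m := setIntegral_le_integral (hint P) (ae_of_all _ hf0)
  clear_value m IA S
  have hb : 0 < (1 - ε) * m := mul_pos hε1' hm
  have hD : 0 < (1 - ε) * m + ε * S := by nlinarith [mul_nonneg hε0.le hS0]
  set T := ((1 - ε) * IA) / ((1 - ε) * m + ε * S) with hT_def
  clear_value T
  have haD : (1 - ε) * IA ≤ (1 - ε) * m + ε * S := by nlinarith [mul_nonneg hε0.le hS0]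
  -- formula for each contaminated posterior
  have hpost : ∀ Q : ProbabilityMeasure Ω,
      postProb f (contam P (Q : Measure Ω) ε) A
        = ((1 - ε) * IA + ε * ∫ ψ in A, f ψ ∂(Q : Measure Ω))
          / ((1 - ε) * m + ε * ∫ ψ, f ψ ∂(Q : Measure Ω)) := by
    intro Q
    rw [postProb, integral_contam f (hint P) (hint Q) hε0.le hε1.le,
      setIntegral_contam f (hint P) (hint Q) hε0.le hε1.le, ← hIA_def, ← hm_def]
  -- lower bound T on each posterior
  have hlow : ∀ Q : ProbabilityMeasure Ω,
      T ≤ postProb f (contam P (Q : Measure Ω) ε) A := by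
    intro Q
    rw [hpost Q]
    set t := ∫ ψ in A, f ψ ∂(Q : Measure Ω) with ht_def
    set s := ∫ ψ, f ψ ∂(Q : Measure Ω) with hs_def
    have ht0 : 0 ≤ t := setIntegral_nonneg hA fun ψ _ => hf0 ψ
    have hts : t ≤ s := setIntegral_le_integral (hint Q) (ae_of_all _ hf0)
    have hst : s ≤ t + S := by
      have hsplit : t + ∫ ψ in Aᶜ, f ψ ∂(Q : Measure Ω) = s := integral_add_compl hA (hint Q)
      have h1 : ∫ ψ in Aᶜ, f ψ ∂(Q : Measure Ω) ≤ ∫ _ in Aᶜ, S ∂(Q : Measure Ω) :=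
        setIntegral_mono_on ((hint Q).integrableOn) (integrableOn_const (measure_ne_top _ _))
          hA.compl (fun ψ hψ => by rw [hS_def]; exact le_csSup hbdd ⟨ψ, hψ, rfl⟩)
      have h2 : ((Q : Measure Ω) Aᶜ).toReal ≤ 1 := by
        simpa using ENNReal.toReal_mono (by simp) (prob_le_one (μ := (Q : Measure Ω)) (s := Aᶜ))
      rw [setIntegral_const, smul_eq_mul] at h1
      nlinarith [mul_le_of_le_one_left hS0 (show (Q : Measure Ω).real Aᶜ ≤ 1 from h2)]
    have hden : 0 < (1 - ε) * m + ε * s := by nlinarith [mul_nonneg hε0.le (ht0.trans hts)]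
    rw [hT_def, div_le_div_iff₀ hD hden]
    have hh1 : ε * t * ((1 - ε) * IA) ≤ ε * t * ((1 - ε) * m + ε * S) :=
      mul_le_mul_of_nonneg_left haD (mul_nonneg hε0.le ht0)
    have hh2 : (1 - ε) * IA * (ε * s) ≤ (1 - ε) * IA * (ε * (t + S)) :=
      mul_le_mul_of_nonneg_left (by nlinarith) (mul_nonneg hε1'.le hIA0)
    nlinarith [hh1, hh2]
  have hbddb : BddBelow (Set.range fun Q : ProbabilityMeasure Ω =>
      postProb f (contam P (Q : Measure Ω) ε) A) := by
    refine ⟨T, ?_⟩; rintro _ ⟨Q, rfl⟩; exact hlow Q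
  -- upper bound: lowerPost ≤ T
  have hupper : lowerPost f P ε A ≤ T := by
    rcases eq_empty_or_nonempty Aᶜ with hAc | hAc
    · -- A = univ
      have hAuniv : A = univ := compl_empty_iff.mp hAc
      have hSe : S = 0 := by rw [hS_def, hAc, image_empty, Real.sSup_empty]
      have hIAe : IA = m := by rw [hIA_def, hAuniv, Measure.restrict_univ]; exact hm_def.symm
      set Q0 : ProbabilityMeasure Ω := ⟨P, inferInstance⟩ with hQ0
      have h1 : postProb f (contam P (Q0 : Measure Ω) ε) A = T := by
        rw [hpost Q0]
        have hQ0c : (Q0 : Measure Ω) = P := rfl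
        rw [hQ0c, ← hIA_def, ← hm_def, hT_def, hSe, hIAe, mul_zero, add_zero,
          show (1 - ε) * m + ε * m = m by ring, div_self hm.ne', div_self hb.ne']
      calc lowerPost f P ε A ≤ postProb f (contam P (Q0 : Measure Ω) ε) A :=
            ciInf_le hbddb Q0
        _ = T := h1
    · refine le_of_forall_pos_le_add fun δ hδ => ?_
      set b := (1 - ε) * m with hb_def
      clear_value b
      obtain ⟨δ', hδ'0, hδ'1, hδ'2⟩ :
          ∃ δ' : ℝ, 0 < δ' ∧ ε * δ' ≤ b / 2 ∧ ε * δ' ≤ δ * b / 2 := by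
        refine ⟨min (b / (2 * ε)) (δ * b / (2 * ε)),
          lt_min (by positivity) (by positivity), ?_, ?_⟩
        · calc ε * min (b / (2 * ε)) (δ * b / (2 * ε)) ≤ ε * (b / (2 * ε)) :=
              mul_le_mul_of_nonneg_left (min_le_left _ _) hε0.le
            _ = b / 2 := by field_simp
        · calc ε * min (b / (2 * ε)) (δ * b / (2 * ε)) ≤ ε * (δ * b / (2 * ε)) :=
              mul_le_mul_of_nonneg_left (min_le_right _ _) hε0.le
            _ = δ * b / 2 := by field_simp
      obtain ⟨y, hy, hyS⟩ := exists_lt_of_lt_csSup (hAc.image f)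
        (show S - δ' < sSup (f '' Aᶜ) by rw [← hS_def]; linarith)
      obtain ⟨ψ, hψ, rfl⟩ := hy
      have hfψS : f ψ ≤ S := by rw [hS_def]; exact le_csSup hbdd ⟨ψ, hψ, rfl⟩
      have ht : ∫ ψ' in A, f ψ' ∂(Measure.dirac ψ) = 0 := by
        rw [setIntegral_dirac' hf.stronglyMeasurable ψ hA]; exact if_neg hψ
      have hs : ∫ ψ', f ψ' ∂(Measure.dirac ψ) = f ψ :=
        integral_dirac' f ψ hf.stronglyMeasurable
      set Qd : ProbabilityMeasure Ω := ⟨Measure.dirac ψ, inferInstance⟩ with hQd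
      have hQval : postProb f (contam P (Qd : Measure Ω) ε) A
          = ((1 - ε) * IA) / (b + ε * f ψ) := by
        rw [hpost Qd]
        have hQdc : (Qd : Measure Ω) = Measure.dirac ψ := rfl
        rw [hQdc, ht, hs, mul_zero, add_zero]
      have hstep : lowerPost f P ε A ≤ ((1 - ε) * IA) / (b + ε * f ψ) := by
        rw [← hQval]; exact ciInf_le hbddb Qd
      refine hstep.trans ?_
      -- final arithmetic
      set a := (1 - ε) * IA with ha_def
      set D := b + ε * S with hD_def
      clear_value a D
      have ha0 : 0 ≤ a := by rw [ha_def]; exact mul_nonneg hε1'.le hIA0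
      have hTa : T = a / D := by rw [hT_def, ha_def, hD_def]
      have hT0 : 0 ≤ T := by rw [hTa]; exact div_nonneg ha0 hD.le
      have hT1 : T * D = a := by rw [hTa]; exact div_mul_cancel₀ a hD.ne'
      have hTle : T ≤ 1 := by rw [hTa, div_le_one hD]; exact haD
      have hden2 : 0 < b + ε * f ψ := by nlinarith [mul_nonneg hε0.le (hf0 ψ)]
      have hDd : D - ε * δ' ≤ b + ε * f ψ := by
        have h : ε * (S - δ') ≤ ε * f ψ := mul_le_mul_of_nonneg_left hyS.le hε0.le
        rw [hD_def]; nlinarith [h]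
      have hDd2 : b / 2 ≤ D - ε * δ' := by
        rw [hD_def]; nlinarith [mul_nonneg hε0.le hS0]
      rw [div_le_iff₀ hden2]
      have h1 : (T + δ) * (D - ε * δ') ≤ (T + δ) * (b + ε * f ψ) :=
        mul_le_mul_of_nonneg_left hDd (by linarith)
      have h2 : T * (ε * δ') ≤ ε * δ' :=
        mul_le_of_le_one_left (mul_nonneg hε0.le hδ'0.le) hTle
      nlinarith [h1, h2, mul_le_mul_of_nonneg_left hDd2 hδ.le]
  have key : lowerPost f P ε A = T := le_antisymm hupper (le_ciInf hlow)
  rw [key, postProb, rSup, ← hm_def, ← hIA_def, ← hS_def]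
  have hpos2 : 0 < 1 + ε / (1 - ε) * (S / m) := by
    have : 0 ≤ ε / (1 - ε) * (S / m) :=
      mul_nonneg (div_nonneg hε0.le hε1'.le) (div_nonneg hS0 hm.le)
    linarith
  rw [eq_div_iff (ne_of_gt hpos2), hT_def]
  field_simp
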